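/- Local sets are invariant under local complementation: if L = D ∪ Odd_G(D) is a local set of G, then L is also a local set of G ⋆ u for every vertex u. Moreover the number of generators of L is the same in G and G ⋆ u. -/

import Mathlib

open scoped Classical

/-- Local complementation of `G` at a vertex `u`: toggle all edges between
distinct neighbors of `u`. -/
def localComp {V : Type*} (G : SimpleGraph V) (u : V) : SimpleGraph V where
  Adj x y := Xor' (G.Adj x y) (x ≠ y ∧ G.Adj u x ∧ G.Adj u y)
  symm := by
    constructor
    intro x y h
    have h1 := G.adj_comm x y
    have h2 : (y ≠ x) ↔ (x ≠ y) := ne_comm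
    simp only [Xor'] at h ⊢
    rw [← h1, h2, and_comm (a := G.Adj u y)]
    exact h
  loopless := by
    constructor
    intro x h
    rcases h with ⟨h1, -⟩ | ⟨⟨h1, -, -⟩, -⟩
    · exact G.irrefl h1
    · exact h1 rfl

/-- The odd neighborhood of a set `D` of vertices. -/
noncomputable def oddN {V : Type*} [Fintype V] (G : SimpleGraph V) (D : Finset V) :
    Finset V :=
  Finset.univ.filter fun v => Odd (D.filter fun d => G.Adj v d).card

/-- A local set of `G`: a set of the form `D ∪ Odd(D)` for some nonempty `D`. -/
noncomputable def IsLocalSet {V : Type*} [Fintype V] (G : SimpleGraph V)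
    (L : Finset V) : Prop :=
  ∃ D : Finset V, D.Nonempty ∧ L = D ∪ oddN G D

section Aux

variable {V : Type*} [Fintype V]

/-- Indicator of a proposition in `ZMod 2`. -/
noncomputable def chi (P : Prop) : ZMod 2 := if P then 1 else 0

lemma chi_true {P : Prop} (h : P) : chi P = 1 := if_pos h
lemma chi_false {P : Prop} (h : ¬ P) : chi P = 0 := if_neg h

lemma chi_congr {P Q : Prop} (h : P ↔ Q) : chi P = chi Q := by
  unfold chi; by_cases hP : P <;> simp [hP, h.symm, ← h]

lemma chi_xor (a b : Prop) : chi (Xor' a b) = chi a + chi b := by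
  unfold chi
  by_cases ha : a <;> by_cases hb : b <;> simp [Xor', ha, hb] <;> decide

lemma zmod2_cases (x : ZMod 2) : x = 0 ∨ x = 1 := by revert x; decide

/-- Parity of the number of neighbors of `v` inside `D`. -/
noncomputable def sg (G : SimpleGraph V) (v : V) (D : Finset V) : ZMod 2 :=
  ∑ d ∈ D, chi (G.Adj v d)

lemma mem_oddN (G : SimpleGraph V) (D : Finset V) (v : V) :
    v ∈ oddN G D ↔ sg G v D = 1 := by
  have hcard : ((D.filter fun d => G.Adj v d).card : ZMod 2) = sg G v D := by
    rw [Finset.card_filter]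
    push_cast
    rfl
  rw [oddN, Finset.mem_filter]
  simp only [Finset.mem_univ, true_and]
  rw [Nat.odd_iff, ← hcard, ← ZMod.natCast_mod _ 2]
  rcases Nat.mod_two_eq_zero_or_one (D.filter fun d => G.Adj v d).card with h | h <;>
    simp [h] <;> decide

lemma localComp_adj {G : SimpleGraph V} {u x y : V} :
    (localComp G u).Adj x y ↔ Xor' (G.Adj x y) (x ≠ y ∧ G.Adj u x ∧ G.Adj u y) :=
  Iff.rfl

lemma localComp_adj_u {G : SimpleGraph V} {u d : V} :
    (localComp G u).Adj u d ↔ G.Adj u d := by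
  rw [localComp_adj]
  simp [Xor', xor_def, fun h : G.Adj u u => G.irrefl h]

lemma localComp_invol (G : SimpleGraph V) (u : V) :
    localComp (localComp G u) u = G := by
  ext x y
  rw [localComp_adj, localComp_adj]
  have hx : (localComp G u).Adj u x ↔ G.Adj u x := localComp_adj_u
  have hy : (localComp G u).Adj u y ↔ G.Adj u y := localComp_adj_u
  simp only [Xor', xor_def, hx, hy]
  tauto

lemma sg_u_localComp (G : SimpleGraph V) (u : V) (D : Finset V) :
    sg (localComp G u) u D = sg G u D := by
  unfold sg
  exact Finset.sum_congr rfl fun d _ => chi_congr localComp_adj_u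

lemma sg_localComp (G : SimpleGraph V) (u v : V) (D : Finset V) :
    sg (localComp G u) v D = sg G v D + chi (G.Adj u v) * (sg G u D + chi (v ∈ D)) := by
  have key : ∀ d ∈ D, chi ((localComp G u).Adj v d)
      = chi (G.Adj v d) + chi (G.Adj u v) * (chi (G.Adj u d) + chi (d = v)) := by
    intro d _
    rw [localComp_adj, chi_xor]
    congr 1
    by_cases hdv : d = v
    · have hud : chi (G.Adj u d) = chi (G.Adj u v) := chi_congr (by rw [hdv])
      rw [hud, chi_true hdv, chi_false (show ¬(v ≠ d ∧ G.Adj u v ∧ G.Adj u d) from fun h => h.1 hdv.symm)]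
      rcases zmod2_cases (chi (G.Adj u v)) with h | h <;> rw [h] <;> decide
    · by_cases huv : G.Adj u v
      · by_cases hud : G.Adj u d
        · rw [chi_true (⟨fun h => hdv h.symm, huv, hud⟩ : v ≠ d ∧ G.Adj u v ∧ G.Adj u d)]
          rw [chi_true huv, chi_true hud, chi_false hdv]
          ring
        · rw [chi_false (fun h => hud h.2.2), chi_true huv, chi_false hud, chi_false hdv]
          ring
      · rw [chi_false (fun h => huv h.2.1), chi_false huv]
        ring
  have hind : (∑ d ∈ D, chi (d = v)) = chi (v ∈ D) := by
    unfold chi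
    rw [Finset.sum_ite_eq' D v (fun _ => 1)]
    simp
  unfold sg
  rw [Finset.sum_congr rfl key, Finset.sum_add_distrib, ← Finset.mul_sum,
    Finset.sum_add_distrib, hind]

/-- Toggle membership of `u` in `D`. -/
noncomputable def tog (u : V) (D : Finset V) : Finset V :=
  if u ∈ D then D.erase u else insert u D

lemma tog_tog (u : V) (D : Finset V) : tog u (tog u D) = D := by
  by_cases h : u ∈ D
  · simp [tog, h, Finset.insert_erase h]
  · simp [tog, h, Finset.erase_insert h]

lemma mem_tog {u v : V} (h : v ≠ u) (D : Finset V) : v ∈ tog u D ↔ v ∈ D := by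
  unfold tog
  split <;> simp [Finset.mem_erase, Finset.mem_insert, h]

lemma sg_tog (G : SimpleGraph V) (v u : V) (D : Finset V) :
    sg G v (tog u D) = sg G v D + chi (G.Adj v u) := by
  unfold tog
  by_cases h : u ∈ D
  · rw [if_pos h]
    have := Finset.sum_erase_add D (fun d => chi (G.Adj v d)) h
    unfold sg
    have h2 : (2 : ZMod 2) = 0 := by decide
    linear_combination this - (chi (G.Adj v u)) * h2 - this + this
  · rw [if_neg h]
    unfold sg
    rw [Finset.sum_insert h]
    ring

/-- The generator map for local complementation. -/
noncomputable def phi (G : SimpleGraph V) (u : V) (D : Finset V) : Finset V :=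
  if sg G u D = 1 then tog u D else D

lemma sg_u_phi (G : SimpleGraph V) (u : V) (D : Finset V) :
    sg G u (phi G u D) = sg G u D := by
  unfold phi
  split
  · rw [sg_tog, chi_false (fun h : G.Adj u u => G.irrefl h), add_zero]
  · rfl

lemma phi_phi (G : SimpleGraph V) (u : V) (D : Finset V) :
    phi (localComp G u) u (phi G u D) = D := by
  unfold phi
  by_cases h : sg G u D = 1
  · rw [if_pos h]
    have : sg (localComp G u) u (tog u D) = 1 := by
      rw [sg_u_localComp, sg_tog, chi_false (fun h : G.Adj u u => G.irrefl h), add_zero, h]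
    rw [if_pos this, tog_tog]
  · rw [if_neg h, if_neg (by rwa [sg_u_localComp])]

lemma gen_map (G : SimpleGraph V) (u : V) (L D : Finset V) (hD : D.Nonempty)
    (hL : L = D ∪ oddN G D) :
    (phi G u D).Nonempty ∧ L = phi G u D ∪ oddN (localComp G u) (phi G u D) := by
  by_cases hK : sg G u D = 1
  · have hphi : phi G u D = tog u D := if_pos hK
    constructor
    · rw [hphi]
      by_cases hu : u ∈ D
      · obtain ⟨d, hd, hadj⟩ : ∃ d ∈ D, G.Adj u d := by
          by_contra hcon
          push_neg at hcon
          have : sg G u D = 0 :=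
            Finset.sum_eq_zero fun d hd => chi_false (hcon d hd)
          rw [this] at hK
          exact absurd hK (by decide)
        exact ⟨d, by rw [tog, if_pos hu]; exact Finset.mem_erase.2 ⟨hadj.ne', hd⟩⟩
      · exact ⟨u, by rw [tog, if_neg hu]; exact Finset.mem_insert_self u D⟩
    · rw [hphi, hL]
      ext v
      simp only [Finset.mem_union, mem_oddN]
      by_cases hv : v = u
      · subst hv
        have h1 : sg (localComp G v) v (tog v D) = 1 := by
          rw [sg_u_localComp, sg_tog, chi_false (fun h : G.Adj v v => G.irrefl h), add_zero, hK]
        simp [hK, h1]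
      · rw [mem_tog hv]
        by_cases hvD : v ∈ D
        · simp [hvD]
        · have h2 : sg (localComp G u) v (tog u D) = sg G v D := by
            rw [sg_tog, sg_localComp, hK, chi_false hvD,
              chi_congr ((localComp G u).adj_comm v u),
              chi_congr (localComp_adj_u (G := G) (u := u) (d := v))]
            have h2z : (2 : ZMod 2) = 0 := by decide
            linear_combination chi (G.Adj u v) * h2z
          simp [hvD, h2]
  · have hK0 : sg G u D = 0 := (zmod2_cases _).resolve_right hK
    have hphi : phi G u D = D := if_neg hK
    refine ⟨by rw [hphi]; exact hD, ?_⟩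
    rw [hphi, hL]
    ext v
    simp only [Finset.mem_union, mem_oddN]
    by_cases hvD : v ∈ D
    · simp [hvD]
    · have h2 : sg (localComp G u) v D = sg G v D := by
        rw [sg_localComp, hK0, chi_false hvD]
        ring
      simp [hvD, h2]

end Aux

/-- Local sets are invariant under local complementation, with the same number of
generators. -/
theorem stmt_17 {V : Type*} [Fintype V] (G : SimpleGraph V) (u : V) (L : Finset V)
    (hL : IsLocalSet G L) :
    IsLocalSet (localComp G u) L ∧
      {D : Finset V | D.Nonempty ∧ L = D ∪ oddN G D}.ncard =
        {D : Finset V | D.Nonempty ∧ L = D ∪ oddN (localComp G u) D}.ncard := by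
  obtain ⟨D, hD, hLD⟩ := hL
  have hgm := gen_map G u L D hD hLD
  refine ⟨⟨phi G u D, hgm.1, hgm.2⟩, ?_⟩
  have himg : {D : Finset V | D.Nonempty ∧ L = D ∪ oddN (localComp G u) D}
      = phi G u '' {D : Finset V | D.Nonempty ∧ L = D ∪ oddN G D} := by
    ext E
    constructor
    · rintro ⟨hE1, hE2⟩
      have h := gen_map (localComp G u) u L E hE1 hE2
      rw [localComp_invol] at h
      refine ⟨phi (localComp G u) u E, h, ?_⟩
      have := phi_phi (localComp G u) u E
      rwa [localComp_invol] at this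
    · rintro ⟨F, ⟨hF1, hF2⟩, rfl⟩
      exact gen_map G u L F hF1 hF2
  have hinj : Function.Injective (phi G u) := by
    intro a b hab
    have ha := phi_phi G u a
    have hb := phi_phi G u b
    rw [← ha, ← hb, hab]
  rw [himg, Set.ncard_image_of_injective _ hinj]
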